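/- arXiv:math/0411286 — 2 statements merged into one kernel-verified Lean document; each statement's English description precedes it below -/
import Mathlib

section
/- The sum of transpositions C = s_{12} + s_{13} + ... + s_{1N} in the group algebra of S_N acts on the irreducible representation W_λ associated to a Young diagram λ by a scalar if and only if λ is a rectangle; in that case the scalar equals 2·C(λ)/N, where C(λ) is the content of λ. -/
open Finset Equiv MonoidAlgebra
open scoped Classical

/-- The canonical filling of the cells of `lam` by `{1, …, N}` (an arbitrary bijective
tableau), for `lam` a Young diagram with `N` cells. -/
noncomputable def tab (N : ℕ) (lam : YoungDiagram) (h : lam.cells.card = N) :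
    Fin N ≃ lam.cells :=
  (finCongr h.symm).trans lam.cells.equivFin.symm

/-- The Young symmetrizer `c_λ = a_λ ⋅ b_λ` in `ℂ[S_N]` associated to the canonical
tableau of `lam`: `a_λ` is the sum over the row group, and `b_λ` the signed sum over the
column group. -/
noncomputable def youngSym (N : ℕ) (lam : YoungDiagram) (h : lam.cells.card = N) :
    MonoidAlgebra ℂ (Equiv.Perm (Fin N)) :=
  (∑ σ ∈ univ.filter (fun σ : Equiv.Perm (Fin N) =>
      ∀ i, (tab N lam h (σ i)).val.1 = (tab N lam h i).val.1),
    MonoidAlgebra.single σ (1 : ℂ)) *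
  (∑ σ ∈ univ.filter (fun σ : Equiv.Perm (Fin N) =>
      ∀ i, (tab N lam h (σ i)).val.2 = (tab N lam h i).val.2),
    MonoidAlgebra.single σ ((Equiv.Perm.sign σ : ℤ) : ℂ))

/-- The Specht module `W_λ = ℂ[S_N] ⋅ c_λ`, the irreducible representation of `S_N`
attached to `lam`, realized as a left ideal of the group algebra. -/
noncomputable def spechtModule (N : ℕ) (lam : YoungDiagram) (h : lam.cells.card = N) :
    Submodule ℂ (MonoidAlgebra ℂ (Equiv.Perm (Fin N))) :=
  LinearMap.range (LinearMap.mulRight ℂ (youngSym N lam h))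

/-- A Young diagram is a rectangle when its cells form a product `[0,a) × [0,b)`. -/
def IsRectangle (lam : YoungDiagram) : Prop :=
  ∃ a b : ℕ, lam.cells = Finset.range a ×ˢ Finset.range b

/-- The content of a Young diagram: the sum of `j - i` over all cells `(i, j)`. -/
def content (lam : YoungDiagram) : ℤ := ∑ c ∈ lam.cells, ((c.2 : ℤ) - (c.1 : ℤ))

namespace JMaux

variable (N : ℕ) (lam : YoungDiagram) (h : lam.cells.card = N)

/-- row of the cell containing letter `i` -/
noncomputable def rw (i : Fin N) : ℕ := (tab N lam h i).val.1
/-- column of the cell containing letter `i` -/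
noncomputable def cl (i : Fin N) : ℕ := (tab N lam h i).val.2

noncomputable def RF : Finset (Equiv.Perm (Fin N)) :=
  univ.filter (fun σ : Equiv.Perm (Fin N) =>
    ∀ i, (tab N lam h (σ i)).val.1 = (tab N lam h i).val.1)

noncomputable def CF : Finset (Equiv.Perm (Fin N)) :=
  univ.filter (fun σ : Equiv.Perm (Fin N) =>
    ∀ i, (tab N lam h (σ i)).val.2 = (tab N lam h i).val.2)

noncomputable def aa : MonoidAlgebra ℂ (Equiv.Perm (Fin N)) :=
  ∑ σ ∈ RF N lam h, MonoidAlgebra.single σ (1 : ℂ)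

noncomputable def bb : MonoidAlgebra ℂ (Equiv.Perm (Fin N)) :=
  ∑ σ ∈ CF N lam h, MonoidAlgebra.single σ ((Equiv.Perm.sign σ : ℤ) : ℂ)

theorem ys_eq : youngSym N lam h = aa N lam h * bb N lam h := rfl

/-- sign as a complex number -/
noncomputable def sg (σ : Equiv.Perm (Fin N)) : ℂ := ((Equiv.Perm.sign σ : ℤ) : ℂ)

variable {N lam h}

theorem sg_one : sg N 1 = 1 := by simp [sg]
theorem sg_mul (σ τ : Equiv.Perm (Fin N)) : sg N (σ * τ) = sg N σ * sg N τ := by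
  simp [sg]
theorem sg_swap {x y : Fin N} (hxy : x ≠ y) : sg N (Equiv.swap x y) = -1 := by
  simp [sg, Equiv.Perm.sign_swap hxy]
theorem sg_mul_self (σ : Equiv.Perm (Fin N)) : sg N σ * sg N σ = 1 := by
  rcases Int.units_eq_one_or (Equiv.Perm.sign σ) with hs | hs <;> simp [sg, hs]

theorem mem_RF {σ : Equiv.Perm (Fin N)} :
    σ ∈ RF N lam h ↔ ∀ i, rw N lam h (σ i) = rw N lam h i := by
  simp [RF, rw]

theorem mem_CF {σ : Equiv.Perm (Fin N)} :
    σ ∈ CF N lam h ↔ ∀ i, cl N lam h (σ i) = cl N lam h i := by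
  simp [CF, cl]

theorem RF_one : (1 : Equiv.Perm (Fin N)) ∈ RF N lam h := by simp [mem_RF]
theorem CF_one : (1 : Equiv.Perm (Fin N)) ∈ CF N lam h := by simp [mem_CF]

theorem RF_mul {p p' : Equiv.Perm (Fin N)} (hp : p ∈ RF N lam h) (hp' : p' ∈ RF N lam h) :
    p * p' ∈ RF N lam h := by
  rw [mem_RF] at *
  intro i
  rw [Equiv.Perm.mul_apply, hp, hp']

theorem CF_mul {p p' : Equiv.Perm (Fin N)} (hp : p ∈ CF N lam h) (hp' : p' ∈ CF N lam h) :
    p * p' ∈ CF N lam h := by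
  rw [mem_CF] at *
  intro i
  rw [Equiv.Perm.mul_apply, hp, hp']

theorem RF_inv {p : Equiv.Perm (Fin N)} (hp : p ∈ RF N lam h) : p⁻¹ ∈ RF N lam h := by
  rw [mem_RF] at *
  intro i
  conv_rhs => rw [← Equiv.Perm.one_apply i, ← mul_inv_cancel p, Equiv.Perm.mul_apply, hp]

theorem CF_inv {p : Equiv.Perm (Fin N)} (hp : p ∈ CF N lam h) : p⁻¹ ∈ CF N lam h := by
  rw [mem_CF] at *
  intro i
  conv_rhs => rw [← Equiv.Perm.one_apply i, ← mul_inv_cancel p, Equiv.Perm.mul_apply, hp]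

theorem eq_of_rc {i j : Fin N} (h1 : rw N lam h i = rw N lam h j)
    (h2 : cl N lam h i = cl N lam h j) : i = j := by
  apply (tab N lam h).injective
  apply Subtype.ext
  exact Prod.ext h1 h2

theorem RF_CF_inv {σ : Equiv.Perm (Fin N)} (h1 : σ ∈ RF N lam h) (h2 : σ⁻¹ ∈ CF N lam h) :
    σ = 1 := by
  apply Equiv.ext; intro i
  rw [mem_RF] at h1; rw [mem_CF] at h2
  have := h2 (σ i)
  rw [← Equiv.Perm.mul_apply, inv_mul_cancel, Equiv.Perm.one_apply] at this
  simp only [Equiv.Perm.one_apply]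
  exact eq_of_rc (h1 i) this.symm

/-- the letter sitting in a given cell -/
noncomputable def lt' (c : ℕ × ℕ) (hc : c ∈ lam.cells) : Fin N :=
  (tab N lam h).symm ⟨c, hc⟩

theorem rw_lt' {c : ℕ × ℕ} (hc : c ∈ lam.cells) :
    rw N lam h (lt' (h := h) c hc) = c.1 := by
  simp [lt', rw]

theorem cl_lt' {c : ℕ × ℕ} (hc : c ∈ lam.cells) :
    cl N lam h (lt' (h := h) c hc) = c.2 := by
  simp [lt', cl]

theorem cell_mem (i : Fin N) : (rw N lam h i, cl N lam h i) ∈ lam.cells := by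
  have := (tab N lam h i).2
  simpa [rw, cl] using this

theorem swap_mem_RF {x y : Fin N} (hr : rw N lam h x = rw N lam h y) :
    Equiv.swap x y ∈ RF N lam h := by
  rw [mem_RF]
  intro i
  rcases eq_or_ne i x with rfl | hx
  · rw [Equiv.swap_apply_left]; exact hr.symm
  rcases eq_or_ne i y with rfl | hy
  · rw [Equiv.swap_apply_right]; exact hr
  · rw [Equiv.swap_apply_of_ne_of_ne hx hy]

theorem swap_mem_CF {x y : Fin N} (hr : cl N lam h x = cl N lam h y) :
    Equiv.swap x y ∈ CF N lam h := by
  rw [mem_CF]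
  intro i
  rcases eq_or_ne i x with rfl | hx
  · rw [Equiv.swap_apply_left]; exact hr.symm
  rcases eq_or_ne i y with rfl | hy
  · rw [Equiv.swap_apply_right]; exact hr
  · rw [Equiv.swap_apply_of_ne_of_ne hx hy]

/-- absorption of a row permutation on the left of `aa` -/
theorem single_mul_aa {p : Equiv.Perm (Fin N)} (hp : p ∈ RF N lam h) :
    MonoidAlgebra.single p (1 : ℂ) * aa N lam h = aa N lam h := by
  unfold aa
  rw [Finset.mul_sum]
  refine Finset.sum_equiv (Equiv.mulLeft p) (fun σ => ?_) (fun σ hσ => ?_)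
  · constructor
    · intro hσ; exact RF_mul hp hσ
    · intro hσ
      have := RF_mul (RF_inv hp) hσ
      simpa using this
  · rw [MonoidAlgebra.single_mul_single, one_mul]
    rfl

/-- absorption of a (signed) column permutation on the right of `bb` -/
theorem bb_mul_single {q : Equiv.Perm (Fin N)} (hq : q ∈ CF N lam h) :
    bb N lam h * MonoidAlgebra.single q (1 : ℂ) = sg N q • bb N lam h := by
  unfold bb
  rw [Finset.sum_mul, Finset.smul_sum]
  refine Finset.sum_equiv (Equiv.mulRight q) (fun σ => ?_) (fun σ hσ => ?_)
  · constructor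
    · intro hσ; exact CF_mul hσ hq
    · intro hσ
      have := CF_mul hσ (CF_inv hq)
      simpa using this
  · rw [MonoidAlgebra.single_mul_single, MonoidAlgebra.smul_single']
    show MonoidAlgebra.single (σ * q) (((Equiv.Perm.sign σ : ℤ) : ℂ) * 1)
      = MonoidAlgebra.single (σ * q) (sg N q * ((Equiv.Perm.sign (σ * q) : ℤ) : ℂ))
    congr 1
    rw [mul_one]
    show sg N σ = sg N q * sg N (σ * q)
    rw [sg_mul]
    linear_combination (- sg N σ) * sg_mul_self (N := N) q

/-- the coefficient function of the Young symmetrizer -/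
noncomputable def nu (w : Equiv.Perm (Fin N)) : ℂ := (youngSym N lam h).coeff w

theorem nu_def (w : Equiv.Perm (Fin N)) : nu (h := h) w = (aa N lam h * bb N lam h).coeff w := rfl

theorem nu_p_mul {p : Equiv.Perm (Fin N)} (hp : p ∈ RF N lam h) (w : Equiv.Perm (Fin N)) :
    nu (h := h) (p * w) = nu (h := h) w := by
  rw [nu_def, nu_def]
  conv_lhs => rw [← single_mul_aa hp, mul_assoc]
  rw [MonoidAlgebra.coeff_single_mul_apply, one_mul, inv_mul_cancel_left]

theorem nu_mul_q {q : Equiv.Perm (Fin N)} (hq : q ∈ CF N lam h) (w : Equiv.Perm (Fin N)) :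
    nu (h := h) (w * q) = sg N q * nu (h := h) w := by
  have key : aa N lam h * bb N lam h * MonoidAlgebra.single q (1:ℂ)
      = sg N q • (aa N lam h * bb N lam h) := by
    rw [mul_assoc, bb_mul_single hq, mul_smul_comm]
  have h2 := congrArg (fun f : MonoidAlgebra ℂ (Equiv.Perm (Fin N)) => f.coeff (w * q)) key
  rw [MonoidAlgebra.coeff_mul_single_apply, mul_inv_cancel_right, mul_one,
    MonoidAlgebra.coeff_smul_apply, smul_eq_mul] at h2
  rw [nu_def, nu_def]
  linear_combination (-(sg N q)) * h2
    - ((aa N lam h * bb N lam h).coeff (w * q)) * sg_mul_self (N := N) q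

theorem nu_one : nu (h := h) (1 : Equiv.Perm (Fin N)) = 1 := by
  rw [nu_def]
  unfold aa
  rw [Finset.sum_mul, MonoidAlgebra.coeff_sum, Finset.sum_apply']
  have hterm : ∀ σ ∈ RF N lam h,
      (MonoidAlgebra.single σ (1:ℂ) * bb N lam h).coeff 1
        = if σ = 1 then (1:ℂ) else 0 := by
    intro σ hσ
    rw [MonoidAlgebra.coeff_single_mul_apply, one_mul, mul_one]
    unfold bb
    rw [MonoidAlgebra.coeff_sum, Finset.sum_apply']
    rcases eq_or_ne σ 1 with rfl | hσ1
    · simp only [if_pos rfl]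
      rw [Finset.sum_eq_single (1 : Equiv.Perm (Fin N))]
      · simp
      · intro τ hτ hτ1
        rw [MonoidAlgebra.coeff_single, Finsupp.single_apply, if_neg (by simpa using hτ1)]
      · intro habs; exact absurd CF_one habs
    · rw [if_neg hσ1]
      apply Finset.sum_eq_zero
      intro τ hτ
      rw [MonoidAlgebra.coeff_single, Finsupp.single_apply, if_neg]
      intro hcontra
      subst hcontra
      exact hσ1 (RF_CF_inv hσ (by simpa using hτ))
  rw [Finset.sum_congr rfl hterm, Finset.sum_ite_eq' (RF N lam h) 1, if_pos RF_one]

/-- key vanishing lemma: a pair of letters in the same row whose `w⁻¹`-images are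
in the same column kills the coefficient -/
theorem nu_pair {x y : Fin N} {w : Equiv.Perm (Fin N)} (hxy : x ≠ y)
    (hr : rw N lam h x = rw N lam h y)
    (hc : cl N lam h (w⁻¹ x) = cl N lam h (w⁻¹ y)) :
    nu (h := h) w = 0 := by
  have hinv : w⁻¹ x ≠ w⁻¹ y := fun hcontra => hxy (by simpa using congrArg w hcontra)
  have h1 : Equiv.swap x y * w = w * Equiv.swap (w⁻¹ x) (w⁻¹ y) :=
    Equiv.swap_mul_eq_mul_swap w x y
  have h2 : nu (h := h) w = nu (h := h) (Equiv.swap x y * w) :=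
    (nu_p_mul (swap_mem_RF hr) w).symm
  rw [h1, nu_mul_q (swap_mem_CF hc), sg_swap hinv] at h2
  have : (2 : ℂ) * nu (h := h) w = 0 := by linear_combination h2
  simpa using this

theorem nu_swap_row {x y : Fin N} (hxy : x ≠ y) (hr : rw N lam h x = rw N lam h y) :
    nu (h := h) (Equiv.swap x y) = 1 := by
  have := nu_p_mul (swap_mem_RF hr) (1 : Equiv.Perm (Fin N))
  rw [mul_one, nu_one] at this
  exact this

theorem nu_swap_col {x y : Fin N} (hxy : x ≠ y) (hc : cl N lam h x = cl N lam h y) :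
    nu (h := h) (Equiv.swap x y) = -1 := by
  have := nu_mul_q (swap_mem_CF hc) (1 : Equiv.Perm (Fin N))
  rw [one_mul, nu_one, mul_one, sg_swap hxy] at this
  exact this

theorem nu_swap_gen {x y : Fin N} (hr : rw N lam h x ≠ rw N lam h y)
    (hc : cl N lam h x ≠ cl N lam h y) :
    nu (h := h) (Equiv.swap x y) = 0 := by
  have hxy : x ≠ y := fun hcontra => hr (by rw [hcontra])
  rcases lt_or_gt_of_ne hc with hlt | hlt
  · -- cl x < cl y : use cell (rw y, cl x)
    have hmem : ((rw N lam h y, cl N lam h x) : ℕ × ℕ) ∈ lam.cells := by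
      rw [lam.mem_cells]
      exact lam.up_left_mem le_rfl hlt.le (by rw [← lam.mem_cells]; exact cell_mem y)
    set β := lt' (h := h) (rw N lam h y, cl N lam h x) hmem with hβ
    have hrβ : rw N lam h β = rw N lam h y := rw_lt' hmem
    have hcβ : cl N lam h β = cl N lam h x := cl_lt' hmem
    have hβx : β ≠ x := fun hcontra => hr (by rw [← hcontra, hrβ])
    have hβy : β ≠ y := fun hcontra => hc (by rw [← hcontra, hcβ])
    apply nu_pair (x := y) (y := β) (Ne.symm hβy) hrβ.symm
    rw [Equiv.swap_inv, Equiv.swap_apply_right,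
      Equiv.swap_apply_of_ne_of_ne hβx hβy, hcβ]
  · -- cl y < cl x : use cell (rw x, cl y)
    have hmem : ((rw N lam h x, cl N lam h y) : ℕ × ℕ) ∈ lam.cells := by
      rw [lam.mem_cells]
      exact lam.up_left_mem le_rfl hlt.le (by rw [← lam.mem_cells]; exact cell_mem x)
    set β := lt' (h := h) (rw N lam h x, cl N lam h y) hmem with hβ
    have hrβ : rw N lam h β = rw N lam h x := rw_lt' hmem
    have hcβ : cl N lam h β = cl N lam h y := cl_lt' hmem
    have hβx : β ≠ x := fun hcontra => hc (by rw [← hcontra, hcβ])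
    have hβy : β ≠ y := fun hcontra => hr (by rw [← hcontra, hrβ])
    apply nu_pair (x := x) (y := β) (Ne.symm hβx) hrβ.symm
    rw [Equiv.swap_inv, Equiv.swap_apply_left,
      Equiv.swap_apply_of_ne_of_ne hβx hβy, hcβ]

/-- if the coefficient is nonzero then `w` lies in `R * C` -/
theorem nu_ne_zero_imp {w : Equiv.Perm (Fin N)} (hw : nu (h := h) w ≠ 0) :
    ∃ p ∈ RF N lam h, ∃ q ∈ CF N lam h, w = p * q := by
  by_contra hcon
  push_neg at hcon
  apply hw
  rw [nu_def]
  unfold aa bb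
  rw [Finset.sum_mul, MonoidAlgebra.coeff_sum, Finset.sum_apply']
  apply Finset.sum_eq_zero
  intro p hp
  rw [Finset.mul_sum, MonoidAlgebra.coeff_sum, Finset.sum_apply']
  apply Finset.sum_eq_zero
  intro q hq
  rw [MonoidAlgebra.single_mul_single, one_mul]
  rw [MonoidAlgebra.coeff_single, Finsupp.single_apply, if_neg]
  intro hcontra
  exact hcon p hp q hq hcontra.symm

/-- counting letters in the row of `m` -/
theorem card_row_eq (m : Fin N) :
    (univ.filter (fun j : Fin N => rw N lam h j = rw N lam h m)).card
      = lam.rowLen (rw N lam h m) := by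
  rw [lam.rowLen_eq_card]
  apply Finset.card_bij (fun j _ => ((tab N lam h j).val : ℕ × ℕ))
  · intro j hj
    simp only [Finset.mem_filter, Finset.mem_univ, true_and] at hj
    rw [YoungDiagram.mem_row_iff]
    constructor
    · rw [← lam.mem_cells]; exact (tab N lam h j).2
    · exact hj
  · intro j1 _ j2 _ heq
    exact (tab N lam h).injective (Subtype.ext heq)
  · intro c hc
    rw [YoungDiagram.mem_row_iff, ← lam.mem_cells] at hc
    refine ⟨lt' (h := h) c hc.1, ?_, ?_⟩
    · simp only [Finset.mem_filter, Finset.mem_univ, true_and]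
      have := rw_lt' (h := h) hc.1
      rw [this, hc.2]
    · simp [lt']

/-- counting letters in the column of `m` -/
theorem card_col_eq (m : Fin N) :
    (univ.filter (fun j : Fin N => cl N lam h j = cl N lam h m)).card
      = lam.colLen (cl N lam h m) := by
  rw [lam.colLen_eq_card]
  apply Finset.card_bij (fun j _ => ((tab N lam h j).val : ℕ × ℕ))
  · intro j hj
    simp only [Finset.mem_filter, Finset.mem_univ, true_and] at hj
    rw [YoungDiagram.mem_col_iff]
    constructor
    · rw [← lam.mem_cells]; exact (tab N lam h j).2
    · exact hj
  · intro j1 _ j2 _ heq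
    exact (tab N lam h).injective (Subtype.ext heq)
  · intro c hc
    rw [YoungDiagram.mem_col_iff, ← lam.mem_cells] at hc
    refine ⟨lt' (h := h) c hc.1, ?_, ?_⟩
    · simp only [Finset.mem_filter, Finset.mem_univ, true_and]
      have := cl_lt' (h := h) hc.1
      rw [this, hc.2]
    · simp [lt']

/-- the signed count of transpositions through `m` -/
theorem sum_nu_swap (m : Fin N) :
    ∑ j ∈ univ.filter (· ≠ m), nu (h := h) (Equiv.swap m j)
      = ((lam.rowLen (rw N lam h m) : ℂ) - 1) - ((lam.colLen (cl N lam h m) : ℂ) - 1) := by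
  classical
  set s := univ.filter (fun j : Fin N => j ≠ m) with hs
  have hrow : ∑ j ∈ s.filter (fun j => rw N lam h j = rw N lam h m),
      nu (h := h) (Equiv.swap m j)
      = ((lam.rowLen (rw N lam h m) : ℂ) - 1) := by
    rw [Finset.sum_congr rfl (g := fun _ => (1:ℂ)) (fun j hj => by
      simp only [hs, Finset.mem_filter, Finset.mem_univ, true_and] at hj
      exact nu_swap_row (Ne.symm hj.1) hj.2.symm)]
    rw [Finset.sum_const, nsmul_eq_mul, mul_one]
    have hins : (univ.filter (fun j : Fin N => rw N lam h j = rw N lam h m))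
        = insert m (s.filter (fun j => rw N lam h j = rw N lam h m)) := by
      ext j
      simp only [hs, Finset.mem_filter, Finset.mem_univ, true_and, Finset.mem_insert]
      constructor
      · intro hj
        rcases eq_or_ne j m with rfl | hne
        · exact Or.inl rfl
        · exact Or.inr ⟨hne, hj⟩
      · rintro (rfl | ⟨_, hj⟩)
        · rfl
        · exact hj
    have hnotmem : m ∉ s.filter (fun j => rw N lam h j = rw N lam h m) := by
      simp [hs]
    have hcardeq := card_row_eq (h := h) m
    rw [hins, Finset.card_insert_of_notMem hnotmem] at hcardeq
    have : ((s.filter (fun j => rw N lam h j = rw N lam h m)).card + 1 : ℂ)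
        = (lam.rowLen (rw N lam h m) : ℂ) := by exact_mod_cast hcardeq
    linear_combination this
  have hcol : ∑ j ∈ s.filter (fun j => cl N lam h j = cl N lam h m),
      nu (h := h) (Equiv.swap m j)
      = -((lam.colLen (cl N lam h m) : ℂ) - 1) := by
    rw [Finset.sum_congr rfl (g := fun _ => (-1:ℂ)) (fun j hj => by
      simp only [hs, Finset.mem_filter, Finset.mem_univ, true_and] at hj
      exact nu_swap_col (Ne.symm hj.1) hj.2.symm)]
    rw [Finset.sum_const]
    have hins : (univ.filter (fun j : Fin N => cl N lam h j = cl N lam h m))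
        = insert m (s.filter (fun j => cl N lam h j = cl N lam h m)) := by
      ext j
      simp only [hs, Finset.mem_filter, Finset.mem_univ, true_and, Finset.mem_insert]
      constructor
      · intro hj
        rcases eq_or_ne j m with rfl | hne
        · exact Or.inl rfl
        · exact Or.inr ⟨hne, hj⟩
      · rintro (rfl | ⟨_, hj⟩)
        · rfl
        · exact hj
    have hnotmem : m ∉ s.filter (fun j => cl N lam h j = cl N lam h m) := by
      simp [hs]
    have hcardeq := card_col_eq (h := h) m
    rw [hins, Finset.card_insert_of_notMem hnotmem] at hcardeq
    have hc2 : ((s.filter (fun j => cl N lam h j = cl N lam h m)).card + 1 : ℂ)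
        = (lam.colLen (cl N lam h m) : ℂ) := by exact_mod_cast hcardeq
    rw [nsmul_eq_mul]
    linear_combination -hc2
  have hgen : ∑ j ∈ ((s.filter (fun j => ¬ rw N lam h j = rw N lam h m)).filter
      (fun j => ¬ cl N lam h j = cl N lam h m)), nu (h := h) (Equiv.swap m j) = 0 := by
    apply Finset.sum_eq_zero
    intro j hj
    simp only [Finset.mem_filter] at hj
    exact nu_swap_gen (fun hcontra => hj.1.2 hcontra.symm) (fun hcontra => hj.2 hcontra.symm)
  have hcolset : (s.filter (fun j => ¬ rw N lam h j = rw N lam h m)).filter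
      (fun j => cl N lam h j = cl N lam h m)
      = s.filter (fun j => cl N lam h j = cl N lam h m) := by
    ext j
    simp only [hs, Finset.mem_filter, Finset.mem_univ, true_and]
    constructor
    · rintro ⟨⟨hj1, _⟩, hj2⟩; exact ⟨hj1, hj2⟩
    · rintro ⟨hj1, hj2⟩
      exact ⟨⟨hj1, fun hcontra => hj1 (eq_of_rc hcontra hj2)⟩, hj2⟩
  rw [← Finset.sum_filter_add_sum_filter_not s (fun j => rw N lam h j = rw N lam h m)
      (fun j => nu (h := h) (Equiv.swap m j)),
    ← Finset.sum_filter_add_sum_filter_not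
      (s.filter (fun j => ¬ rw N lam h j = rw N lam h m))
      (fun j => cl N lam h j = cl N lam h m)
      (fun j => nu (h := h) (Equiv.swap m j)),
    hcolset, hrow, hcol, hgen]
  ring

theorem swap_swap_eq {x y z : Fin N} (hxy : x ≠ y) (hxz : x ≠ z) (hyz : y ≠ z) :
    Equiv.swap x z * Equiv.swap x y = Equiv.swap y z * Equiv.swap x z := by
  apply Equiv.ext; intro i
  simp only [Equiv.Perm.mul_apply, Equiv.swap_apply_def]
  split_ifs <;> simp_all

section Rect

variable {a b : ℕ} (hrect : lam.cells = Finset.range a ×ˢ Finset.range b)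

include hrect

theorem mem_rect {i j : ℕ} : ((i, j) : ℕ × ℕ) ∈ lam.cells ↔ i < a ∧ j < b := by
  rw [hrect]; simp [Finset.mem_product]

theorem rw_lt (m : Fin N) : rw N lam h m < a := by
  have := cell_mem (h := h) m
  rw [mem_rect hrect] at this
  exact this.1

theorem cl_lt (m : Fin N) : cl N lam h m < b := by
  have := cell_mem (h := h) m
  rw [mem_rect hrect] at this
  exact this.2

theorem rowLen_rect {i : ℕ} (hi : i < a) : lam.rowLen i = b := by
  have hiff : ∀ j : ℕ, j < lam.rowLen i ↔ j < b := by
    intro j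
    rw [← YoungDiagram.mem_iff_lt_rowLen, ← lam.mem_cells, mem_rect hrect]
    constructor
    · exact fun hj => hj.2
    · exact fun hj => ⟨hi, hj⟩
  have h1 := hiff b
  have h2 := hiff (lam.rowLen i)
  omega

theorem colLen_rect {j : ℕ} (hj : j < b) : lam.colLen j = a := by
  have hiff : ∀ i : ℕ, i < lam.colLen j ↔ i < a := by
    intro i
    rw [← YoungDiagram.mem_iff_lt_colLen, ← lam.mem_cells, mem_rect hrect]
    constructor
    · exact fun hi => hi.1
    · exact fun hi => ⟨hi, hj⟩
  have h1 := hiff a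
  have h2 := hiff (lam.colLen j)
  omega

/-- the signed count through any letter, in the rectangle case -/
theorem sum_nu_swap_rect (m : Fin N) :
    ∑ j ∈ univ.filter (· ≠ m), nu (h := h) (Equiv.swap m j) = (b : ℂ) - (a : ℂ) := by
  rw [sum_nu_swap, rowLen_rect hrect (rw_lt hrect m), colLen_rect hrect (cl_lt hrect m)]
  ring

/-- MAIN COMBINATORIAL LEMMA: coefficientwise eigen-identity in the rectangle case. -/
theorem key_sum (m : Fin N) (w : Equiv.Perm (Fin N)) :
    ∑ j ∈ univ.filter (· ≠ m), nu (h := h) (Equiv.swap m j * w)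
      = ((b : ℂ) - (a : ℂ)) * nu (h := h) w := by
  classical
  by_cases hw : ∃ p ∈ RF N lam h, ∃ q ∈ CF N lam h, w = p * q
  · -- case A : w ∈ R⋅C
    obtain ⟨p, hp, q, hq, rfl⟩ := hw
    have hνw : nu (h := h) (p * q) = sg N q := by
      rw [nu_p_mul hp]
      have := nu_mul_q (h := h) hq 1
      rwa [one_mul, nu_one, mul_one] at this
    have hterm : ∀ j ∈ univ.filter (· ≠ m),
        nu (h := h) (Equiv.swap m j * (p * q))
          = sg N q * nu (h := h) (Equiv.swap (p⁻¹ m) (p⁻¹ j)) := by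
      intro j _
      rw [← mul_assoc, nu_mul_q hq, Equiv.swap_mul_eq_mul_swap, nu_p_mul hp]
    rw [Finset.sum_congr rfl hterm, ← Finset.mul_sum]
    have hre : ∑ j ∈ univ.filter (· ≠ m), nu (h := h) (Equiv.swap (p⁻¹ m) (p⁻¹ j))
        = ∑ j ∈ univ.filter (· ≠ p⁻¹ m), nu (h := h) (Equiv.swap (p⁻¹ m) j) := by
      refine Finset.sum_equiv (p⁻¹ : Equiv.Perm (Fin N)) (fun j => ?_) (fun j _ => rfl)
      simp only [Finset.mem_filter, Finset.mem_univ, true_and]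
      exact not_congr (Equiv.apply_eq_iff_eq p⁻¹).symm
    rw [hre, sum_nu_swap_rect hrect, hνw]
    ring
  · -- case B : w ∉ R⋅C
    have hνw : nu (h := h) w = 0 := by
      by_contra hne
      exact hw (nu_ne_zero_imp hne)
    rw [hνw, mul_zero]
    by_cases hz : ∀ j ∈ univ.filter (· ≠ m), nu (h := h) (Equiv.swap m j * w) = 0
    · exact Finset.sum_eq_zero hz
    push_neg at hw hz
    obtain ⟨j₀, hj₀, hne⟩ := hz
    obtain ⟨p₀, hp₀, q₀, hq₀, heq⟩ := nu_ne_zero_imp hne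
    have hj₀m : j₀ ≠ m := by simpa using hj₀
    have hweq : w = Equiv.swap m j₀ * (p₀ * q₀) := by
      rw [← heq, ← mul_assoc, Equiv.swap_mul_self, one_mul]
    set x := p₀⁻¹ m with hxdef
    set y := p₀⁻¹ j₀ with hydef
    have hxy : x ≠ y := fun hc => hj₀m ((Equiv.injective p₀⁻¹) hc).symm
    have hconv : ∀ j : Fin N, Equiv.swap m j * p₀ = p₀ * Equiv.swap x (p₀⁻¹ j) :=
      fun j => Equiv.swap_mul_eq_mul_swap p₀ m j
    have hconv0 : Equiv.swap m j₀ * p₀ = p₀ * Equiv.swap x y := hconv j₀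
    -- x and y are in general position
    have hrowxy : rw N lam h x ≠ rw N lam h y := by
      intro hr
      refine hw (p₀ * Equiv.swap x y) (RF_mul hp₀ (swap_mem_RF hr)) q₀ hq₀ ?_
      rw [hweq, ← mul_assoc, hconv0]
    have hcolxy : cl N lam h x ≠ cl N lam h y := by
      intro hc
      refine hw p₀ hp₀ (Equiv.swap x y * q₀) (CF_mul (swap_mem_CF hc) hq₀) ?_
      rw [hweq, ← mul_assoc, hconv0, mul_assoc]
    -- the completing cell
    have hzmem : ((rw N lam h y, cl N lam h x) : ℕ × ℕ) ∈ lam.cells :=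
      (mem_rect hrect).mpr ⟨rw_lt hrect y, cl_lt hrect x⟩
    set z := lt' (h := h) (rw N lam h y, cl N lam h x) hzmem with hzdef
    have hrz : rw N lam h z = rw N lam h y := rw_lt' hzmem
    have hcz : cl N lam h z = cl N lam h x := cl_lt' hzmem
    have hzx : z ≠ x := fun hc => hrowxy (by rw [← hrz, hc])
    have hzy : z ≠ y := fun hc => hcolxy (by rw [← hcz, hc])
    -- termwise rewriting
    have hterm : ∀ j ∈ univ.filter (· ≠ m),
        nu (h := h) (Equiv.swap m j * w)
          = sg N q₀ * nu (h := h) (Equiv.swap x (p₀⁻¹ j) * Equiv.swap x y) := by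
      intro j _
      rw [hweq]
      have e3 : p₀⁻¹ * (Equiv.swap m j₀ * p₀) = Equiv.swap x y := by
        rw [hconv0, inv_mul_cancel_left]
      have hassoc : Equiv.swap m j * (Equiv.swap m j₀ * (p₀ * q₀))
          = (p₀ * (Equiv.swap x (p₀⁻¹ j) * Equiv.swap x y)) * q₀ := by
        calc Equiv.swap m j * (Equiv.swap m j₀ * (p₀ * q₀))
            = (Equiv.swap m j * p₀) * ((p₀⁻¹ * (Equiv.swap m j₀ * p₀)) * q₀) := by group
          _ = (p₀ * Equiv.swap x (p₀⁻¹ j)) * (Equiv.swap x y * q₀) := by rw [hconv j, e3]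
          _ = (p₀ * (Equiv.swap x (p₀⁻¹ j) * Equiv.swap x y)) * q₀ := by group
      rw [hassoc, nu_mul_q hq₀, nu_p_mul hp₀]
    rw [Finset.sum_congr rfl hterm, ← Finset.mul_sum]
    -- reindex
    have hre : ∑ j ∈ univ.filter (· ≠ m),
        nu (h := h) (Equiv.swap x (p₀⁻¹ j) * Equiv.swap x y)
        = ∑ j ∈ univ.filter (· ≠ x),
            nu (h := h) (Equiv.swap x j * Equiv.swap x y) := by
      refine Finset.sum_equiv (p₀⁻¹ : Equiv.Perm (Fin N)) (fun j => ?_) (fun j _ => rfl)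
      simp only [Finset.mem_filter, Finset.mem_univ, true_and]
      exact not_congr (Equiv.apply_eq_iff_eq p₀⁻¹).symm
    rw [hre]
    -- now evaluate the sum over ĵ ≠ x
    set f : Fin N → ℂ := fun j => nu (h := h) (Equiv.swap x j * Equiv.swap x y) with hf
    have hymem : y ∈ univ.filter (· ≠ x) := by simp [Ne.symm hxy]
    have hzmem' : z ∈ (univ.filter (· ≠ x)).erase y := by
      rw [Finset.mem_erase]
      exact ⟨hzy, by simp [hzx]⟩
    rw [← Finset.add_sum_erase _ f hymem, ← Finset.add_sum_erase _ f hzmem']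
    have hfy : f y = 1 := by
      rw [hf]
      simp only
      rw [Equiv.swap_mul_self]
      exact nu_one
    have hfz : f z = -1 := by
      rw [hf]
      simp only
      rw [swap_swap_eq hxy (Ne.symm hzx) (Ne.symm hzy)]
      rw [nu_p_mul (swap_mem_RF (by rw [hrz]))]
      exact nu_swap_col (Ne.symm hzx) hcz.symm
    have hrest : ∑ j ∈ (((univ.filter (· ≠ x)).erase y).erase z), f j = 0 := by
      apply Finset.sum_eq_zero
      intro j hj
      rw [Finset.mem_erase, Finset.mem_erase, Finset.mem_filter] at hj
      obtain ⟨hjz, hjy, _, hjx⟩ := hj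
      set σ := Equiv.swap x j * Equiv.swap x y with hσ
      have hσx : σ x = y := by
        rw [hσ]
        simp only [Equiv.Perm.mul_apply]
        rw [Equiv.swap_apply_left, Equiv.swap_apply_of_ne_of_ne (Ne.symm hxy)
          (fun hc => hjy hc.symm)]
      have hσz : σ z = z := by
        rw [hσ]
        simp only [Equiv.Perm.mul_apply]
        rw [Equiv.swap_apply_of_ne_of_ne hzx hzy, Equiv.swap_apply_of_ne_of_ne hzx
          (fun hc => hjz hc.symm)]
      have hinvy : σ⁻¹ y = x := by rw [← hσx, ← Equiv.Perm.mul_apply, inv_mul_cancel, Equiv.Perm.one_apply]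
      have hinvz : σ⁻¹ z = z := by
        conv_lhs => rw [← hσz]
        rw [← Equiv.Perm.mul_apply, inv_mul_cancel, Equiv.Perm.one_apply]
      rw [hf]
      simp only
      apply nu_pair (x := y) (y := z) (Ne.symm hzy) hrz.symm
      rw [← hσ, hinvy, hinvz, hcz]
    rw [hfy, hfz, hrest, add_zero]
    ring

/-- algebra-level eigen identity for rectangles -/
theorem key_elem (m : Fin N) :
    (∑ j ∈ univ.filter (· ≠ m), MonoidAlgebra.single (Equiv.swap m j) (1 : ℂ))
        * youngSym N lam h
      = (((b : ℂ) - (a : ℂ))) • youngSym N lam h := by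
  apply MonoidAlgebra.ext; apply Finsupp.ext
  intro w
  rw [Finset.sum_mul, MonoidAlgebra.coeff_sum, Finset.sum_apply']
  have hterm : ∀ j ∈ univ.filter (· ≠ m),
      (MonoidAlgebra.single (Equiv.swap m j) (1:ℂ) * youngSym N lam h).coeff w
        = nu (h := h) (Equiv.swap m j * w) := by
    intro j _
    rw [MonoidAlgebra.coeff_single_mul_apply, one_mul, Equiv.swap_inv]
    rfl
  rw [Finset.sum_congr rfl hterm, key_sum hrect]
  rw [MonoidAlgebra.coeff_smul_apply, smul_eq_mul]
  rfl

end Rect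

/-- conjugation formula for the sum of transpositions -/
theorem conj_sum (i0 : Fin N) (g : Equiv.Perm (Fin N)) (r : ℂ) :
    (∑ j ∈ univ.filter (· ≠ i0), MonoidAlgebra.single (Equiv.swap i0 j) (1 : ℂ))
        * MonoidAlgebra.single g r
      = MonoidAlgebra.single g r *
        (∑ j ∈ univ.filter (· ≠ g⁻¹ i0),
          MonoidAlgebra.single (Equiv.swap (g⁻¹ i0) j) (1 : ℂ)) := by
  rw [Finset.sum_mul, Finset.mul_sum]
  refine Finset.sum_equiv (g⁻¹ : Equiv.Perm (Fin N)) (fun j => ?_) (fun j _ => ?_)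
  · simp only [Finset.mem_filter, Finset.mem_univ, true_and]
    exact not_congr (Equiv.apply_eq_iff_eq g⁻¹).symm
  · rw [MonoidAlgebra.single_mul_single, MonoidAlgebra.single_mul_single,
      one_mul, mul_one]
    congr 1
    exact Equiv.swap_mul_eq_mul_swap g i0 j

/-- cancel a single unit on the left -/
theorem cancel_single {g : Equiv.Perm (Fin N)} {u v : MonoidAlgebra ℂ (Equiv.Perm (Fin N))}
    (huv : MonoidAlgebra.single g (1:ℂ) * u = MonoidAlgebra.single g (1:ℂ) * v) : u = v := by
  have hc := congrArg (fun t => MonoidAlgebra.single g⁻¹ (1:ℂ) * t) huv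
  rw [← mul_assoc, ← mul_assoc, MonoidAlgebra.single_mul_single, inv_mul_cancel,
    one_mul] at hc
  rw [← MonoidAlgebra.one_def, one_mul, one_mul] at hc
  exact hc

/-- evaluating the eigen-identity at the identity permutation -/
theorem eigen_at {m : Fin N} {κ : ℂ}
    (hCm : (∑ j ∈ univ.filter (· ≠ m), MonoidAlgebra.single (Equiv.swap m j) (1 : ℂ))
        * youngSym N lam h = κ • youngSym N lam h) :
    ((lam.rowLen (rw N lam h m) : ℂ) - 1) - ((lam.colLen (cl N lam h m) : ℂ) - 1) = κ := by
  have hev := congrArg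
    (fun f : MonoidAlgebra ℂ (Equiv.Perm (Fin N)) => f.coeff (1 : Equiv.Perm (Fin N))) hCm
  rw [Finset.sum_mul, MonoidAlgebra.coeff_sum, Finset.sum_apply'] at hev
  have hterm : ∀ j ∈ univ.filter (· ≠ m),
      (MonoidAlgebra.single (Equiv.swap m j) (1:ℂ) * youngSym N lam h).coeff
          (1 : Equiv.Perm (Fin N))
        = nu (h := h) (Equiv.swap m j) := by
    intro j _
    rw [MonoidAlgebra.coeff_single_mul_apply, one_mul, Equiv.swap_inv, mul_one]
    rfl
  rw [Finset.sum_congr rfl hterm, sum_nu_swap] at hev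
  have hev2 : (κ • youngSym N lam h).coeff (1 : Equiv.Perm (Fin N)) = κ := by
    rw [MonoidAlgebra.coeff_smul_apply, smul_eq_mul]
    have : (youngSym N lam h).coeff (1 : Equiv.Perm (Fin N)) = nu (h := h) 1 := rfl
    rw [this, nu_one, mul_one]
  rw [hev2] at hev
  exact hev

/-- from constancy of (row length − column length) over all letters, the diagram
is a rectangle -/
theorem rect_of_const (hN : 0 < N) {κ : ℂ}
    (hconst : ∀ m : Fin N,
      ((lam.rowLen (rw N lam h m) : ℂ) - 1) - ((lam.colLen (cl N lam h m) : ℂ) - 1) = κ) :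
    IsRectangle lam := by
  have hcells : lam.cells.Nonempty := by
    rw [← Finset.card_pos, h]; exact hN
  have hcell : ∀ (c : ℕ × ℕ) (hc : c ∈ lam.cells),
      ((lam.rowLen c.1 : ℂ) - 1) - ((lam.colLen c.2 : ℂ) - 1) = κ := by
    intro c hc
    have := hconst (lt' (h := h) c hc)
    rwa [rw_lt' hc, cl_lt' hc] at this
  have h00 : ((0, 0) : ℕ × ℕ) ∈ lam.cells := by
    obtain ⟨c, hc⟩ := hcells
    rw [lam.mem_cells]
    exact lam.up_left_mem (Nat.zero_le _) (Nat.zero_le _) ((lam.mem_cells c).mp hc)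
  have hb : ∀ i : ℕ, i < lam.colLen 0 → lam.rowLen i = lam.rowLen 0 := by
    intro i hi
    have hi0 : ((i, 0) : ℕ × ℕ) ∈ lam.cells := by
      rw [lam.mem_cells]
      exact YoungDiagram.mem_iff_lt_colLen.mpr hi
    have e1 := hcell (i, 0) hi0
    have e2 := hcell (0, 0) h00
    have : (lam.rowLen i : ℂ) = (lam.rowLen 0 : ℂ) := by linear_combination e1 - e2
    exact_mod_cast this
  refine ⟨lam.colLen 0, lam.rowLen 0, ?_⟩
  ext c
  obtain ⟨i, j⟩ := c
  rw [Finset.mem_product, Finset.mem_range, Finset.mem_range, lam.mem_cells]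
  constructor
  · intro hm
    have hi : i < lam.colLen 0 := by
      rw [← YoungDiagram.mem_iff_lt_colLen]
      exact lam.up_left_mem le_rfl (Nat.zero_le _) hm
    refine ⟨hi, ?_⟩
    rw [← hb i hi, ← YoungDiagram.mem_iff_lt_rowLen]
    exact hm
  · rintro ⟨hi, hj⟩
    rw [YoungDiagram.mem_iff_lt_rowLen, hb i hi]
    exact hj

theorem gauss (n : ℕ) : 2 * (∑ i ∈ Finset.range n, (i : ℤ)) = n * (n - 1) := by
  induction n with
  | zero => simp
  | succ k ih =>
      rw [Finset.sum_range_succ]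
      push_cast
      push_cast at ih
      linear_combination ih

theorem content_rect {a b : ℕ} (hrect : lam.cells = Finset.range a ×ˢ Finset.range b) :
    2 * content lam = ((a : ℤ) * (b : ℤ)) * ((b : ℤ) - (a : ℤ)) := by
  rw [content, hrect, Finset.sum_product]
  have hrow : ∀ i ∈ Finset.range a, ∑ j ∈ Finset.range b, ((j : ℤ) - (i : ℤ))
      = (∑ j ∈ Finset.range b, (j : ℤ)) - (b : ℤ) * i := by
    intro i _
    rw [Finset.sum_sub_distrib, Finset.sum_const, Finset.card_range, nsmul_eq_mul]
  rw [Finset.sum_congr rfl hrow, Finset.sum_sub_distrib, Finset.sum_const,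
    Finset.card_range, nsmul_eq_mul, ← Finset.mul_sum]
  linear_combination (a : ℤ) * gauss b - (b : ℤ) * gauss a

include h in
theorem scalar_value {a b : ℕ}
    (hrect : lam.cells = Finset.range a ×ˢ Finset.range b) (hN : N ≠ 0) :
    2 * (content lam : ℂ) / (N : ℂ) = (b : ℂ) - (a : ℂ) := by
  have hab : N = a * b := by
    have h2 := h
    rw [hrect, Finset.card_product, Finset.card_range, Finset.card_range] at h2
    exact h2.symm
  have hc := content_rect (lam := lam) hrect
  have hNne : (N : ℂ) ≠ 0 := Nat.cast_ne_zero.mpr hN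
  rw [div_eq_iff hNne]
  have hZ : (2 * content lam : ℤ) = (N : ℤ) * ((b : ℤ) - (a : ℤ)) := by
    rw [hc, hab]; push_cast; ring
  have hC : (2 * (content lam : ℂ)) = (N : ℂ) * ((b : ℂ) - (a : ℂ)) := by
    exact_mod_cast hZ
  linear_combination hC

theorem scalar_on_specht {a b : ℕ}
    (hrect : lam.cells = Finset.range a ×ˢ Finset.range b) (i0 : Fin N) :
    ∀ w ∈ spechtModule N lam h,
      (∑ j ∈ univ.filter (· ≠ i0), MonoidAlgebra.single (Equiv.swap i0 j) (1 : ℂ)) * w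
        = (((b : ℂ) - (a : ℂ))) • w := by
  intro w hw
  rw [spechtModule, LinearMap.mem_range] at hw
  obtain ⟨x, hx⟩ := hw
  rw [LinearMap.mulRight_apply] at hx
  subst hx
  induction x using MonoidAlgebra.induction_linear with
  | zero => simp
  | add f g hf hg => rw [add_mul, mul_add, hf, hg, smul_add]
  | single g r =>
      rw [← mul_assoc, conj_sum, mul_assoc, key_elem hrect (g⁻¹ i0), mul_smul_comm]

end JMaux

/-- The element `C = s_{1,2} + … + s_{1,N}` of `ℂ[S_N]` acts on the
irreducible representation `W_λ` by a scalar if and only if `λ` is a rectangle, in which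
case the scalar equals `2 C(λ) / N`. -/
theorem jucys_murphy_scalar_iff_rectangle (N : ℕ) (lam : YoungDiagram)
    (hcard : lam.cells.card = N) (i0 : Fin N) :
    ((∃ κ : ℂ, ∀ w ∈ spechtModule N lam hcard,
        (∑ j ∈ univ.filter (· ≠ i0),
          MonoidAlgebra.single (Equiv.swap i0 j) (1 : ℂ)) * w = κ • w)
      ↔ IsRectangle lam)
    ∧ (IsRectangle lam → ∀ w ∈ spechtModule N lam hcard,
        (∑ j ∈ univ.filter (· ≠ i0),
          MonoidAlgebra.single (Equiv.swap i0 j) (1 : ℂ)) * w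
          = (2 * (content lam : ℂ) / (N : ℂ)) • w) := by
  have hN : 0 < N := i0.pos
  constructor
  · constructor
    · rintro ⟨κ, hκ⟩
      apply JMaux.rect_of_const (h := hcard) hN (κ := κ)
      intro m
      apply JMaux.eigen_at (h := hcard)
      set g := Equiv.swap i0 m with hg
      have hginv : g⁻¹ i0 = m := by rw [hg, Equiv.swap_inv, Equiv.swap_apply_left]
      have hmem : MonoidAlgebra.single g (1:ℂ) * youngSym N lam hcard
          ∈ spechtModule N lam hcard := by
        rw [spechtModule, LinearMap.mem_range]
        exact ⟨MonoidAlgebra.single g 1, by rw [LinearMap.mulRight_apply]⟩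
      have heq := hκ _ hmem
      rw [← mul_assoc, JMaux.conj_sum, mul_assoc, hginv, ← mul_smul_comm] at heq
      exact JMaux.cancel_single heq
    · intro hrect
      obtain ⟨a, b, hab⟩ := hrect
      exact ⟨(b : ℂ) - (a : ℂ), JMaux.scalar_on_specht (h := hcard) hab i0⟩
  · intro hrect w hw
    obtain ⟨a, b, hab⟩ := hrect
    rw [JMaux.scalar_value (h := hcard) hab (Nat.pos_iff_ne_zero.mp hN)]
    exact JMaux.scalar_on_specht (h := hcard) hab i0 w hw
end

section
/- Let Γ be a nontrivial finite subgroup of SL(2,C) and let L = C² be its tautological 2-dimensional representation. Then for every irreducible complex representation Y of Γ, Hom_Γ(L ⊗ Y, Y) = 0. Equivalently, the McKay graph of Γ has no loops at any vertex. -/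
lemma aux_trace_mulVecLin (M : Matrix (Fin 2) (Fin 2) ℂ) :
    LinearMap.trace ℂ (Fin 2 → ℂ) M.mulVecLin = M.trace := by
  rw [LinearMap.trace_eq_matrix_trace ℂ (Pi.basisFun ℂ (Fin 2)), LinearMap.toMatrix_eq_toMatrix']
  rw [show M.mulVecLin = Matrix.toLin' M from rfl, LinearMap.toMatrix'_toLin']

lemma aux_sl2 (M : Matrix (Fin 2) (Fin 2) ℂ) (hd : M.det = 1) {n : ℕ} (hn : n ≠ 0)
    (hM : M ^ n = 1) (htr : M.trace = 2) : M = 1 := by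
  set N := M - 1 with hNdef
  have hN : N * N = 0 := by
    rw [Matrix.trace_fin_two] at htr
    rw [Matrix.det_fin_two] at hd
    rw [hNdef]
    ext i j
    fin_cases i <;> fin_cases j <;>
      simp [Matrix.mul_apply, Fin.sum_univ_two, Matrix.one_apply]
    · linear_combination M 0 0 * htr - hd
    · linear_combination M 0 1 * htr
    · linear_combination M 1 0 * htr
    · linear_combination M 1 1 * htr - hd
  have hM2 : M = 1 + N := by rw [hNdef]; abel
  have key : ∀ k : ℕ, M ^ k = 1 + (k : ℂ) • N := by
    intro k
    induction k with
    | zero => simp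
    | succ k ih =>
      rw [pow_succ, ih, hM2, mul_add, mul_one, add_mul, one_mul, smul_mul_assoc, hN,
        smul_zero, add_zero]
      push_cast
      rw [add_smul, one_smul]
      abel
  have h1 : 1 + (n : ℂ) • N = 1 := by rw [← key n, hM]
  have h2 : (n : ℂ) • N = 0 := by
    have := h1
    rwa [add_eq_left] at this
  rcases smul_eq_zero.mp h2 with h | h
  · exact absurd (Nat.cast_eq_zero.mp h) hn
  · rw [hNdef, sub_eq_zero] at h; exact h

lemma aux_schur {G : Type} [Group G] {Y : Type} [AddCommGroup Y] [Module ℂ Y]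
    [FiniteDimensional ℂ Y] (hnt : Nontrivial Y)
    (ρ : Representation ℂ G Y)
    (hirr : ∀ p : Submodule ℂ Y, (∀ g : G, ∀ v ∈ p, ρ g v ∈ p) → p = ⊥ ∨ p = ⊤)
    (T : Y →ₗ[ℂ] Y) (hT : ∀ g : G, ρ g ∘ₗ T = T ∘ₗ ρ g)
    (htr : LinearMap.trace ℂ Y T = 0) : T = 0 := by
  haveI := hnt
  obtain ⟨μ, hμ⟩ := Module.End.exists_eigenvalue T
  have hinvstep : ∀ g : G, ∀ v ∈ Module.End.eigenspace T μ, ρ g v ∈ Module.End.eigenspace T μ := by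
    intro g v hv
    rw [Module.End.mem_eigenspace_iff] at hv ⊢
    have := congrArg (fun (h : Y →ₗ[ℂ] Y) => h v) (hT g)
    simp only [LinearMap.comp_apply] at this
    rw [← this, hv, map_smul]
  have htop : Module.End.eigenspace T μ = ⊤ := by
    rcases hirr _ hinvstep with h | h
    · exact absurd h hμ
    · exact h
  have hTeq : T = μ • LinearMap.id := by
    ext v
    have hv : v ∈ Module.End.eigenspace T μ := htop ▸ Submodule.mem_top
    rw [Module.End.mem_eigenspace_iff] at hv
    simpa using hv
  have hμ0 : μ * (Module.finrank ℂ Y : ℂ) = 0 := by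
    rw [hTeq] at htr
    simpa [LinearMap.trace_id] using htr
  rcases mul_eq_zero.mp hμ0 with h | h
  · rw [hTeq, h, zero_smul]
  · exact absurd (Nat.cast_eq_zero.mp h) Module.finrank_pos.ne'

set_option maxHeartbeats 1600000 in
/-- For a nontrivial finite subgroup `Γ` of `SL(2, ℂ)` with tautological
representation `L = ℂ²`, and any irreducible complex representation `Y` of `Γ`,
`Hom_Γ(L ⊗ Y, Y) = 0`: the McKay graph has no loops. -/
theorem mckay_no_loops (G : Subgroup (Matrix.SpecialLinearGroup (Fin 2) ℂ)) [Fintype G]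
    (hG : G ≠ ⊥)
    {Y : Type} [AddCommGroup Y] [Module ℂ Y] [FiniteDimensional ℂ Y]
    (ρ : Representation ℂ G Y) (hnt : Nontrivial Y)
    (hirr : ∀ p : Submodule ℂ Y, (∀ g : G, ∀ v ∈ p, ρ g v ∈ p) → p = ⊥ ∨ p = ⊤)
    (f : TensorProduct ℂ (Fin 2 → ℂ) Y →ₗ[ℂ] Y)
    (hf : ∀ g : G, f ∘ₗ TensorProduct.map
        (Matrix.mulVecLin ((g : Matrix.SpecialLinearGroup (Fin 2) ℂ) : Matrix (Fin 2) (Fin 2) ℂ))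
        (ρ g) = ρ g ∘ₗ f) :
    f = 0 := by
  classical
  by_contra hf0
  set Mg : G → Matrix (Fin 2) (Fin 2) ℂ :=
    fun g => ((g : Matrix.SpecialLinearGroup (Fin 2) ℂ) : Matrix (Fin 2) (Fin 2) ℂ) with hMgdef
  -- pointwise equivariance
  have hfe : ∀ (g : G) (v : Fin 2 → ℂ) (y : Y),
      f (((Mg g).mulVec v) ⊗ₜ[ℂ] ρ g y) = ρ g (f (v ⊗ₜ[ℂ] y)) := by
    intro g v y
    have := congrArg (fun h => h (v ⊗ₜ[ℂ] y)) (hf g)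
    simpa using this
  have hinv : ∀ (g : G) (y : Y), ρ g (ρ g⁻¹ y) = y := by
    intro g y
    have h : ρ g * ρ g⁻¹ = 1 := by rw [← map_mul, mul_inv_cancel, map_one]
    have := congrArg (fun (h : Y →ₗ[ℂ] Y) => h y) h
    simpa using this
  have hsingle : ∀ w : Fin 2 → ℂ,
      w = w 0 • (Pi.single 0 1 : Fin 2 → ℂ) + w 1 • (Pi.single 1 1 : Fin 2 → ℂ) := by
    intro w; funext j; fin_cases j <;> simp
  set F : Fin 2 → (Y →ₗ[ℂ] Y) :=
    fun i => f ∘ₗ TensorProduct.mk ℂ (Fin 2 → ℂ) Y (Pi.single i 1) with hFdef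
  have hFapp : ∀ (i : Fin 2) (y : Y), F i y = f ((Pi.single i 1 : Fin 2 → ℂ) ⊗ₜ[ℂ] y) := by
    intro i y; rfl
  have hFw : ∀ (w : Fin 2 → ℂ) (y : Y), f (w ⊗ₜ[ℂ] y) = w 0 • F 0 y + w 1 • F 1 y := by
    intro w y
    conv_lhs => rw [hsingle w]
    rw [TensorProduct.add_tmul, ← TensorProduct.smul_tmul', ← TensorProduct.smul_tmul']
    rw [map_add, map_smul, map_smul, hFapp, hFapp]
  have hmulVec_single : ∀ (M : Matrix (Fin 2) (Fin 2) ℂ) (i : Fin 2),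
      M.mulVec (Pi.single i 1) = fun j => M j i := by
    intro M i; funext j
    simp [Matrix.mulVec_single]
  have hconj : ∀ (g : G) (i : Fin 2),
      ρ g * F i * ρ g⁻¹ = Mg g 0 i • F 0 + Mg g 1 i • F 1 := by
    intro g i
    ext y
    simp only [Module.End.mul_apply, LinearMap.add_apply, LinearMap.smul_apply]
    rw [hFapp, ← hfe g _ (ρ g⁻¹ y), hinv g y, hmulVec_single,
      hFw (fun j => Mg g j i) y]
  have hdet : ∀ g : G, Mg g 0 0 * Mg g 1 1 - Mg g 0 1 * Mg g 1 0 = 1 := by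
    intro g
    have h := Matrix.SpecialLinearGroup.det_coe (g : Matrix.SpecialLinearGroup (Fin 2) ℂ)
    rw [Matrix.det_fin_two] at h
    exact h
  -- the commutator is equivariant, traceless, hence zero
  set T : Y →ₗ[ℂ] Y := F 0 * F 1 - F 1 * F 0 with hTdef
  have hTconj : ∀ g : G, ρ g * T * ρ g⁻¹ = T := by
    intro g
    have hrr' : ρ g * ρ g⁻¹ = 1 := by rw [← map_mul, mul_inv_cancel, map_one]
    have hr'r : ρ g⁻¹ * ρ g = 1 := by rw [← map_mul, inv_mul_cancel, map_one]
    have key : ∀ A B : Y →ₗ[ℂ] Y,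
        ρ g * (A * B) * ρ g⁻¹ = (ρ g * A * ρ g⁻¹) * (ρ g * B * ρ g⁻¹) := by
      intro A B
      have : (ρ g * A * ρ g⁻¹) * (ρ g * B * ρ g⁻¹) = ρ g * A * (ρ g⁻¹ * ρ g) * B * ρ g⁻¹ := by
        simp only [mul_assoc]
      rw [this, hr'r, mul_one, mul_assoc (ρ g) A B |>.symm]
    calc ρ g * T * ρ g⁻¹
        = (ρ g * F 0 * ρ g⁻¹) * (ρ g * F 1 * ρ g⁻¹)
          - (ρ g * F 1 * ρ g⁻¹) * (ρ g * F 0 * ρ g⁻¹) := by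
          rw [hTdef, mul_sub, sub_mul, key, key]
      _ = (Mg g 0 0 • F 0 + Mg g 1 0 • F 1) * (Mg g 0 1 • F 0 + Mg g 1 1 • F 1)
          - (Mg g 0 1 • F 0 + Mg g 1 1 • F 1) * (Mg g 0 0 • F 0 + Mg g 1 0 • F 1) := by
          rw [hconj, hconj]
      _ = (Mg g 0 0 * Mg g 1 1 - Mg g 0 1 * Mg g 1 0) • (F 0 * F 1 - F 1 * F 0) := by
          simp only [add_mul, mul_add, smul_mul_assoc, mul_smul_comm, smul_smul, smul_sub,
            sub_smul]
          match_scalars <;> ring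
      _ = T := by rw [hdet g, one_smul]
  have hTcomm : ∀ g : G, ρ g ∘ₗ T = T ∘ₗ ρ g := by
    intro g
    have hr'r : ρ g⁻¹ * ρ g = 1 := by rw [← map_mul, inv_mul_cancel, map_one]
    have := congrArg (fun S => S * ρ g) (hTconj g)
    simp only [mul_assoc, hr'r, mul_one] at this
    simpa [Module.End.mul_eq_comp] using this
  have htrT : LinearMap.trace ℂ Y T = 0 := by
    rw [hTdef, map_sub, LinearMap.trace_mul_comm, sub_self]
  have hT0 : T = 0 := aux_schur hnt ρ hirr T hTcomm htrT

  have hcomm0 : F 0 * F 1 = F 1 * F 0 := by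
    have h := hT0; rw [hTdef, sub_eq_zero] at h; exact h
  have hinv2 : ∀ (g : G) (z : Y), ρ g⁻¹ (ρ g z) = z := by
    intro g z
    have := hinv g⁻¹ z
    rwa [inv_inv] at this
  -- the companion map u
  set u : Y →ₗ[ℂ] TensorProduct ℂ (Fin 2 → ℂ) Y :=
    (TensorProduct.mk ℂ (Fin 2 → ℂ) Y (Pi.single 0 1)) ∘ₗ F 1
      - (TensorProduct.mk ℂ (Fin 2 → ℂ) Y (Pi.single 1 1)) ∘ₗ F 0 with hudef
  have huapp : ∀ y : Y, u y = (Pi.single 0 1 : Fin 2 → ℂ) ⊗ₜ[ℂ] (F 1 y)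
      - (Pi.single 1 1 : Fin 2 → ℂ) ⊗ₜ[ℂ] (F 0 y) := fun y => rfl
  -- equivariance of u
  have hρF : ∀ (g : G) (i : Fin 2) (y : Y),
      ρ g (F i y) = Mg g 0 i • F 0 (ρ g y) + Mg g 1 i • F 1 (ρ g y) := by
    intro g i y
    have h := congrArg (fun (S : Y →ₗ[ℂ] Y) => S (ρ g y)) (hconj g i)
    simp only [Module.End.mul_apply, LinearMap.add_apply, LinearMap.smul_apply] at h
    rwa [hinv2 g y] at h
  have huequiv : ∀ g : G,
      TensorProduct.map ((Mg g).mulVecLin) (ρ g) ∘ₗ u = u ∘ₗ ρ g := by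
    intro g
    ext y
    simp only [LinearMap.comp_apply]
    rw [huapp, huapp, map_sub, TensorProduct.map_tmul, TensorProduct.map_tmul]
    simp only [Matrix.mulVecLin_apply]
    rw [hρF g 0 y, hρF g 1 y, hmulVec_single, hmulVec_single,
      hsingle (fun j => Mg g j 0), hsingle (fun j => Mg g j 1)]
    simp only [TensorProduct.add_tmul, TensorProduct.tmul_add, ← TensorProduct.smul_tmul',
      TensorProduct.tmul_smul, smul_smul]
    match_scalars <;> first | ring1 | linear_combination hdet g | linear_combination -hdet g
  have hfu : ∀ y : Y, f (u y) = 0 := by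
    intro y
    rw [huapp, map_sub, ← hFapp 0 (F 1 y), ← hFapp 1 (F 0 y)]
    have := congrArg (fun (S : Y →ₗ[ℂ] Y) => S y) hcomm0
    simp only [Module.End.mul_apply] at this
    rw [this, sub_self]
  -- u is injective
  have hKinv : ∀ g : G, ∀ y ∈ LinearMap.ker (F 0) ⊓ LinearMap.ker (F 1),
      ρ g y ∈ LinearMap.ker (F 0) ⊓ LinearMap.ker (F 1) := by
    intro g y hy
    rw [Submodule.mem_inf, LinearMap.mem_ker, LinearMap.mem_ker] at hy ⊢
    have hz : ∀ i : Fin 2, ρ g⁻¹ (F i (ρ g y)) = 0 := by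
      intro i
      have h := hρF g⁻¹ i (ρ g y)
      rw [hinv2 g y, hy.1, hy.2, smul_zero, smul_zero, add_zero] at h
      exact h
    constructor
    · have := congrArg (ρ g) (hz 0); rwa [hinv g, map_zero] at this
    · have := congrArg (ρ g) (hz 1); rwa [hinv g, map_zero] at this
  have hK : LinearMap.ker (F 0) ⊓ LinearMap.ker (F 1) = ⊥ := by
    rcases hirr (LinearMap.ker (F 0) ⊓ LinearMap.ker (F 1)) hKinv with h | h
    · exact h
    · exfalso
      apply hf0
      apply TensorProduct.ext'
      intro w y
      have hy : y ∈ (⊤ : Submodule ℂ Y) := Submodule.mem_top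
      rw [← h, Submodule.mem_inf, LinearMap.mem_ker, LinearMap.mem_ker] at hy
      rw [hFw w y, hy.1, hy.2, smul_zero, smul_zero, add_zero, LinearMap.zero_apply]
  have huinj : Function.Injective u := by
    rw [← LinearMap.ker_eq_bot, Submodule.eq_bot_iff]
    intro y hy
    rw [LinearMap.mem_ker] at hy
    have hπ : ∀ i : Fin 2, ∃ π : TensorProduct ℂ (Fin 2 → ℂ) Y →ₗ[ℂ] Y,
        ∀ (w : Fin 2 → ℂ) (z : Y), π (w ⊗ₜ[ℂ] z) = w i • z := by
      intro i
      exact ⟨TensorProduct.lift ((LinearMap.lsmul ℂ Y).comp (LinearMap.proj i)),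
        fun w z => rfl⟩
    obtain ⟨π0, hπ0⟩ := hπ 0
    obtain ⟨π1, hπ1⟩ := hπ 1
    have h0 : F 1 y = 0 := by
      have := congrArg π0 hy
      rw [huapp, map_sub, hπ0, hπ0, map_zero] at this
      simpa using this
    have h1 : F 0 y = 0 := by
      have := congrArg π1 hy
      rw [huapp, map_sub, hπ1, hπ1, map_zero] at this
      simpa using this
    have : y ∈ LinearMap.ker (F 0) ⊓ LinearMap.ker (F 1) := by
      rw [Submodule.mem_inf, LinearMap.mem_ker, LinearMap.mem_ker]; exact ⟨h1, h0⟩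
    rwa [hK, Submodule.mem_bot] at this
  -- f is surjective
  have hrangeinv : ∀ g : G, ∀ y ∈ LinearMap.range f, ρ g y ∈ LinearMap.range f := by
    rintro g y ⟨x, rfl⟩
    refine ⟨TensorProduct.map ((Mg g).mulVecLin) (ρ g) x, ?_⟩
    exact congrArg (fun (S : TensorProduct ℂ (Fin 2 → ℂ) Y →ₗ[ℂ] Y) => S x) (hf g)
  have hrange : LinearMap.range f = ⊤ := by
    rcases hirr (LinearMap.range f) hrangeinv with h | h
    · exact absurd (LinearMap.range_eq_bot.mp h) hf0
    · exact h
  obtain ⟨s₀, hs₀⟩ := f.exists_rightInverse_of_surjective hrange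
  haveI : Nonempty G := ⟨1⟩
  have hcard : (Fintype.card G : ℂ) ≠ 0 := Nat.cast_ne_zero.mpr Fintype.card_pos.ne'
  -- averaged splitting
  set s : Y →ₗ[ℂ] TensorProduct ℂ (Fin 2 → ℂ) Y :=
    (Fintype.card G : ℂ)⁻¹ • ∑ g : G,
      (TensorProduct.map ((Mg g).mulVecLin) (ρ g)) ∘ₗ s₀ ∘ₗ ρ g⁻¹ with hsdef
  have hs₀app : ∀ z : Y, f (s₀ z) = z := by
    intro z
    exact congrArg (fun (S : Y →ₗ[ℂ] Y) => S z) hs₀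
  have hfapp : ∀ (g : G) (x : TensorProduct ℂ (Fin 2 → ℂ) Y),
      f (TensorProduct.map ((Mg g).mulVecLin) (ρ g) x) = ρ g (f x) := by
    intro g x
    exact congrArg (fun (S : TensorProduct ℂ (Fin 2 → ℂ) Y →ₗ[ℂ] Y) => S x) (hf g)
  have hfs : ∀ z : Y, f (s z) = z := by
    intro z
    rw [hsdef]
    simp only [LinearMap.smul_apply, LinearMap.sum_apply, LinearMap.comp_apply, map_smul,
      map_sum]
    have hterm : ∀ g : G, f (TensorProduct.map ((Mg g).mulVecLin) (ρ g) (s₀ (ρ g⁻¹ z))) = z := by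
      intro g
      rw [hfapp g, hs₀app, hinv g]
    rw [Finset.sum_congr rfl (fun g _ => hterm g), Finset.sum_const, Finset.card_univ]
    rw [← Nat.cast_smul_eq_nsmul ℂ, smul_smul, inv_mul_cancel₀ hcard, one_smul]
  -- multiplicativity of the tensor action
  have hMgmul : ∀ g h : G, Mg (g * h) = Mg g * Mg h := by
    intro g h
    rw [hMgdef]
    norm_cast
  have hσmul : ∀ (g h : G) (x : TensorProduct ℂ (Fin 2 → ℂ) Y),
      TensorProduct.map ((Mg g).mulVecLin) (ρ g)
        (TensorProduct.map ((Mg h).mulVecLin) (ρ h) x)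
      = TensorProduct.map ((Mg (g * h)).mulVecLin) (ρ (g * h)) x := by
    intro g h x
    have : TensorProduct.map ((Mg g).mulVecLin) (ρ g) ∘ₗ
        TensorProduct.map ((Mg h).mulVecLin) (ρ h)
        = TensorProduct.map ((Mg (g * h)).mulVecLin) (ρ (g * h)) := by
      rw [← TensorProduct.map_comp, hMgmul, Matrix.mulVecLin_mul, map_mul]
      rfl
    exact congrArg (fun (S : TensorProduct ℂ (Fin 2 → ℂ) Y →ₗ[ℂ]
      TensorProduct ℂ (Fin 2 → ℂ) Y) => S x) this
  -- equivariance of s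
  have hsequiv : ∀ h : G, TensorProduct.map ((Mg h).mulVecLin) (ρ h) ∘ₗ s = s ∘ₗ ρ h := by
    intro h
    ext z
    simp only [LinearMap.comp_apply, hsdef, LinearMap.smul_apply, LinearMap.sum_apply,
      map_smul, map_sum]
    congr 1
    refine Fintype.sum_equiv (Equiv.mulLeft h) _ _ ?_
    intro g
    simp only [Equiv.coe_mulLeft]
    rw [hσmul h g]
    congr 1
    rw [mul_inv_rev, map_mul, Module.End.mul_apply, hinv2 h z]

  -- the equivariant isomorphism Y × Y ≃ L ⊗ Y
  set Φ : (Y × Y) →ₗ[ℂ] TensorProduct ℂ (Fin 2 → ℂ) Y := s.coprod u with hΦdef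
  have hΦapp : ∀ p : Y × Y, Φ p = s p.1 + u p.2 := fun p => rfl
  have hΦinj : Function.Injective Φ := by
    rw [← LinearMap.ker_eq_bot, Submodule.eq_bot_iff]
    rintro ⟨a, b⟩ hab
    rw [LinearMap.mem_ker, hΦapp] at hab
    have ha : a = 0 := by
      have := congrArg f hab
      rw [map_add, hfs, hfu, add_zero, map_zero] at this
      exact this
    have hb : b = 0 := by
      apply huinj
      rw [ha, map_zero, zero_add] at hab
      rw [hab, map_zero]
    rw [ha, hb]; rfl
  have hfr : Module.finrank ℂ (Y × Y) = Module.finrank ℂ (TensorProduct ℂ (Fin 2 → ℂ) Y) := by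
    rw [Module.finrank_prod, Module.finrank_tensorProduct, Module.finrank_fin_fun]
    ring
  have hΦsurj : Function.Surjective Φ :=
    (LinearMap.injective_iff_surjective_of_finrank_eq_finrank hfr).mp hΦinj
  set Φe : (Y × Y) ≃ₗ[ℂ] TensorProduct ℂ (Fin 2 → ℂ) Y :=
    LinearEquiv.ofBijective Φ ⟨hΦinj, hΦsurj⟩ with hΦedef
  have hΦequiv : ∀ (g : G) (p : Y × Y),
      TensorProduct.map ((Mg g).mulVecLin) (ρ g) (Φ p) = Φ ((ρ g).prodMap (ρ g) p) := by
    rintro g ⟨a, b⟩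
    rw [hΦapp, map_add]
    have h1 : TensorProduct.map ((Mg g).mulVecLin) (ρ g) (s a) = s (ρ g a) :=
      congrArg (fun (S : Y →ₗ[ℂ] TensorProduct ℂ (Fin 2 → ℂ) Y) => S a) (hsequiv g)
    have h2 : TensorProduct.map ((Mg g).mulVecLin) (ρ g) (u b) = u (ρ g b) :=
      congrArg (fun (S : Y →ₗ[ℂ] TensorProduct ℂ (Fin 2 → ℂ) Y) => S b) (huequiv g)
    rw [h1, h2, hΦapp]
    rfl
  have hσconj : ∀ g : G, TensorProduct.map ((Mg g).mulVecLin) (ρ g)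
      = Φe.conj ((ρ g).prodMap (ρ g)) := by
    intro g
    refine LinearMap.ext fun z => ?_
    rw [LinearEquiv.conj_apply_apply]
    have h1 : (Φe.symm z : Y × Y) = Φe.symm z := rfl
    have h2 : Φ (Φe.symm z) = z := Φe.apply_symm_apply z
    calc TensorProduct.map ((Mg g).mulVecLin) (ρ g) z
        = TensorProduct.map ((Mg g).mulVecLin) (ρ g) (Φ (Φe.symm z)) := by rw [h2]
      _ = Φ ((ρ g).prodMap (ρ g) (Φe.symm z)) := hΦequiv g _
      _ = Φe ((ρ g).prodMap (ρ g) (Φe.symm z)) := rfl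
  -- the trace identity
  have hkey : ∀ g : G, (Mg g).trace * LinearMap.trace ℂ Y (ρ g)
      = 2 * LinearMap.trace ℂ Y (ρ g) := by
    intro g
    have h1 : LinearMap.trace ℂ _ (TensorProduct.map ((Mg g).mulVecLin) (ρ g))
        = (Mg g).trace * LinearMap.trace ℂ Y (ρ g) := by
      rw [LinearMap.trace_tensorProduct', aux_trace_mulVecLin]
    have h2 : LinearMap.trace ℂ _ (TensorProduct.map ((Mg g).mulVecLin) (ρ g))
        = 2 * LinearMap.trace ℂ Y (ρ g) := by
      rw [hσconj g, LinearMap.trace_conj', LinearMap.trace_prodMap']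
      ring
    rw [← h1, h2]
  -- vanishing of the character away from 1
  have hMg1 : ∀ g : G, Mg g = 1 → g = 1 := by
    intro g hg
    have : (g : Matrix.SpecialLinearGroup (Fin 2) ℂ) = 1 := by
      apply Subtype.ext
      rw [hMgdef] at hg
      exact hg
    exact Subtype.ext this
  have hMgdet : ∀ g : G, (Mg g).det = 1 := fun g =>
    Matrix.SpecialLinearGroup.det_coe (g : Matrix.SpecialLinearGroup (Fin 2) ℂ)
  have hMgpow : ∀ g : G, (Mg g) ^ (Fintype.card G) = 1 := by
    intro g
    have h1 : g ^ (Fintype.card G) = 1 := pow_card_eq_one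
    rw [hMgdef]
    calc ((g : Matrix.SpecialLinearGroup (Fin 2) ℂ) : Matrix (Fin 2) (Fin 2) ℂ) ^ Fintype.card G
        = (((g ^ Fintype.card G : G) : Matrix.SpecialLinearGroup (Fin 2) ℂ) :
            Matrix (Fin 2) (Fin 2) ℂ) := by
          rw [SubgroupClass.coe_pow, Matrix.SpecialLinearGroup.coe_pow]
      _ = 1 := by rw [h1]; rfl
  have hcardne : Fintype.card G ≠ 0 := Fintype.card_pos.ne'
  have htrne : ∀ g : G, g ≠ 1 → (Mg g).trace ≠ 2 := by
    intro g hg htr2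
    exact hg (hMg1 g (aux_sl2 (Mg g) (hMgdet g) hcardne (hMgpow g) htr2))
  have hχ : ∀ g : G, g ≠ 1 → LinearMap.trace ℂ Y (ρ g) = 0 := by
    intro g hg
    by_contra hχ0
    apply htrne g hg
    have h := hkey g
    have h2 : ((Mg g).trace - 2) * LinearMap.trace ℂ Y (ρ g) = 0 := by linear_combination h
    rcases mul_eq_zero.mp h2 with h3 | h3
    · linear_combination h3
    · exact absurd h3 hχ0
  -- the representation is trivial, contradiction
  have htriv : ∀ (g : G) (z : Y), ρ g z = z := by
    set P : Y →ₗ[ℂ] Y := ∑ g : G, (ρ g : Y →ₗ[ℂ] Y) with hPdef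
    have htrρ1 : LinearMap.trace ℂ Y (ρ (1 : G)) = (Module.finrank ℂ Y : ℂ) := by
      rw [map_one]
      exact LinearMap.trace_one ℂ Y
    have htrP : LinearMap.trace ℂ Y P = (Module.finrank ℂ Y : ℂ) := by
      rw [hPdef, map_sum, Finset.sum_eq_single (1 : G)]
      · exact htrρ1
      · intro g _ hg; exact hχ g hg
      · intro h; exact absurd (Finset.mem_univ 1) h
    have hPne : P ≠ 0 := by
      intro h
      rw [h, map_zero] at htrP
      exact Nat.cast_ne_zero.mpr Module.finrank_pos.ne' htrP.symm
    obtain ⟨y0, hy0⟩ : ∃ y0 : Y, P y0 ≠ 0 := by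
      by_contra hc
      push_neg at hc
      exact hPne (LinearMap.ext fun y => by rw [hc y]; rfl)
    set V : Submodule ℂ Y := ⨅ g : G, LinearMap.ker (ρ g - LinearMap.id) with hVdef
    have hmemV : ∀ z : Y, z ∈ V ↔ ∀ g : G, ρ g z = z := by
      intro z
      rw [hVdef]
      simp only [Submodule.mem_iInf, LinearMap.mem_ker, LinearMap.sub_apply, LinearMap.id_apply,
        sub_eq_zero]
    have hPcomm : ∀ h : G, ρ h * P = P := by
      intro h
      rw [hPdef, Finset.mul_sum]
      refine Fintype.sum_equiv (Equiv.mulLeft h) _ _ ?_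
      intro g
      simp only [Equiv.coe_mulLeft]
      exact (map_mul ρ h g).symm
    have hPyV : P y0 ∈ V := by
      rw [hmemV]
      intro h
      exact congrArg (fun (S : Y →ₗ[ℂ] Y) => S y0) (hPcomm h)
    have hVinv : ∀ g : G, ∀ z ∈ V, ρ g z ∈ V := by
      intro g z hz
      rw [hmemV] at hz
      rw [hz g, hmemV]
      exact hz
    have hVtop : V = ⊤ := by
      rcases hirr V hVinv with h | h
      · exfalso; apply hy0; rw [← Submodule.mem_bot (R := ℂ), ← h]; exact hPyV
      · exact h
    intro g z
    have : z ∈ V := hVtop ▸ Submodule.mem_top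
    exact (hmemV z).mp this g
  -- final contradiction
  obtain ⟨g, hg1⟩ := Subgroup.ne_bot_iff_exists_ne_one.mp hG
  have hstep : ∀ (v : Fin 2 → ℂ) (y : Y), f ((Mg g).mulVec v ⊗ₜ[ℂ] y) = f (v ⊗ₜ[ℂ] y) := by
    intro v y
    have h := hfe g v y
    rwa [htriv g y, htriv g (f (v ⊗ₜ[ℂ] y))] at h
  have hdetN : (Mg g - 1).det = 2 - (Mg g).trace := by
    rw [Matrix.det_fin_two, Matrix.trace_fin_two]
    simp only [Matrix.sub_apply, Matrix.one_apply_eq, Matrix.one_apply_ne (by decide : (0 : Fin 2) ≠ 1),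
      Matrix.one_apply_ne (by decide : (1 : Fin 2) ≠ 0), sub_zero]
    linear_combination hdet g
  have hdetN0 : (Mg g - 1).det ≠ 0 := by
    rw [hdetN]
    intro h
    exact htrne g hg1 (by linear_combination -h)
  have hzero : ∀ (w : Fin 2 → ℂ) (y : Y), f (w ⊗ₜ[ℂ] y) = 0 := by
    intro w y
    obtain ⟨v, hv⟩ : ∃ v, (Mg g - 1).mulVec v = w :=
      ⟨(Mg g - 1)⁻¹.mulVec w, by
        rw [Matrix.mulVec_mulVec, Matrix.mul_nonsing_inv _ (Ne.isUnit hdetN0), Matrix.one_mulVec]⟩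
    have h1 : (Mg g - 1).mulVec v = (Mg g).mulVec v - v := by
      rw [Matrix.sub_mulVec, Matrix.one_mulVec]
    rw [← hv, h1, TensorProduct.sub_tmul, map_sub, hstep v y, sub_self]
  apply hf0
  apply TensorProduct.ext'
  intro w y
  rw [hzero w y, LinearMap.zero_apply]
end
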